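/- Suppose 0 < 1/L ≪ ε ≪ β ≪ d ≪ c₁ ≤ c₂ < 1 (each parameter sufficiently small in terms of the ones to its right) and n is sufficiently large. Let G be a digraph on n vertices with minimum semidegree δ⁰(G) ≥ c₁n and maximum semidegree Δ⁰(G) ≤ c₂n, and suppose the vertex set of G is partitioned into V₀, V₁, …, V_L with |V₀| ≤ εn and |V₁| = ⋯ = |V_L| = m. Let G' be a spanning subdigraph of G such that d⁺_{G'}(x) > d⁺_G(x) − (d+ε)n and d⁻_{G'}(x) > d⁻_G(x) − (d+ε)n for all vertices x, and such that no edge of G' has both endpoints in the same V_i (1 ≤ i ≤ L). For i ≠ j let d_{i,j} := e_{G'}(V_i, V_j)/m². Then for every i with 1 ≤ i ≤ L one has (c₁ − 3d)L/β < Σ_{j≠i} ⌊d_{i,j}/β⌋ < (c₂ + 2ε)L/β and (c₁ − 3d)L/β < Σ_{j≠i} ⌊d_{j,i}/β⌋ < (c₂ + 2ε)L/β. -/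

import Mathlib

open scoped Classical

/-- Outdegree of a vertex in a digraph given as a relation. -/
noncomputable def outDeg {V : Type*} [Fintype V] (G : V → V → Prop) (v : V) : ℕ :=
  (Finset.univ.filter fun u => G v u).card

/-- Indegree of a vertex in a digraph given as a relation. -/
noncomputable def inDeg {V : Type*} [Fintype V] (G : V → V → Prop) (v : V) : ℕ :=
  (Finset.univ.filter fun u => G u v).card

/-- Number of edges of the digraph `G` directed from `X` to `Y`. -/
noncomputable def eDir {V : Type*} (G : V → V → Prop) (X Y : Finset V) : ℕ :=
  ((X ×ˢ Y).filter fun p => G p.1 p.2).card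

lemma eDir_eq_sum {V : Type*} (H : V → V → Prop) (X Y : Finset V) :
    eDir H X Y = ∑ x ∈ X, (Y.filter fun y => H x y).card := by
  unfold eDir
  rw [Finset.card_filter, Finset.sum_product]
  exact Finset.sum_congr rfl fun x _ => (Finset.card_filter _ _).symm

lemma eDir_flip {V : Type*} (H : V → V → Prop) (X Y : Finset V) :
    eDir (fun a b => H b a) X Y = eDir H Y X := by
  unfold eDir
  apply Finset.card_bij' (fun p _ => p.swap) (fun p _ => p.swap) <;>
    simp +contextual [Finset.mem_filter, Finset.mem_product]

lemma outDeg_flip {V : Type*} [Fintype V] (H : V → V → Prop) (v : V) :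
    outDeg (fun a b => H b a) v = inDeg H v := rfl

section decomp
variable {V : Type*} [Fintype V] [DecidableEq V] {L : ℕ}

lemma univ_decomp (V₀ : Finset V) (P : Fin L → Finset V)
    (hcover : ∀ v : V, v ∈ V₀ ∨ ∃ i, v ∈ P i) :
    V₀ ∪ Finset.univ.biUnion P = Finset.univ := by
  apply Finset.eq_univ_of_forall
  intro v
  rcases hcover v with h | ⟨i, h⟩
  · exact Finset.mem_union_left _ h
  · exact Finset.mem_union_right _ (Finset.mem_biUnion.2 ⟨i, Finset.mem_univ i, h⟩)

lemma outDeg_decomp (H : V → V → Prop) (V₀ : Finset V) (P : Fin L → Finset V)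
    (hd0 : ∀ k, Disjoint V₀ (P k))
    (hdisj : ∀ k l, k ≠ l → Disjoint (P k) (P l))
    (hcover : ∀ v : V, v ∈ V₀ ∨ ∃ i, v ∈ P i) (x : V) :
    outDeg H x = (V₀.filter fun y => H x y).card
      + ∑ j : Fin L, ((P j).filter fun y => H x y).card := by
  unfold outDeg
  rw [← univ_decomp V₀ P hcover, Finset.filter_union, Finset.filter_biUnion,
    Finset.card_union_of_disjoint, Finset.card_biUnion]
  · intro k _ l _ hkl
    exact Finset.disjoint_filter_filter (hdisj k l hkl)
  · rw [Finset.disjoint_biUnion_right]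
    intro k _
    exact Finset.disjoint_filter_filter (hd0 k)

lemma card_decomp (V₀ : Finset V) (P : Fin L → Finset V)
    (hd0 : ∀ k, Disjoint V₀ (P k))
    (hdisj : ∀ k l, k ≠ l → Disjoint (P k) (P l))
    (hcover : ∀ v : V, v ∈ V₀ ∨ ∃ i, v ∈ P i) :
    Fintype.card V = V₀.card + ∑ j : Fin L, (P j).card := by
  rw [← Finset.card_univ, ← univ_decomp V₀ P hcover,
    Finset.card_union_of_disjoint, Finset.card_biUnion]
  · intro k _ l _ hkl; exact hdisj k l hkl
  · rw [Finset.disjoint_biUnion_right]; exact fun k _ => hd0 k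

lemma count_eq (H : V → V → Prop) (V₀ : Finset V) (P : Fin L → Finset V)
    (hd0 : ∀ k, Disjoint V₀ (P k))
    (hdisj : ∀ k l, k ≠ l → Disjoint (P k) (P l))
    (hcover : ∀ v : V, v ∈ V₀ ∨ ∃ i, v ∈ P i) (i : Fin L)
    (hno : ∀ x ∈ P i, ∀ y ∈ P i, ¬ H x y) :
    ∑ x ∈ P i, outDeg H x
      = (∑ x ∈ P i, (V₀.filter fun y => H x y).card)
        + ∑ j ∈ Finset.univ.erase i, eDir H (P i) (P j) := by
  have h1 : ∀ x ∈ P i, outDeg H x = (V₀.filter fun y => H x y).card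
      + ∑ j ∈ Finset.univ.erase i, ((P j).filter fun y => H x y).card := by
    intro x hx
    rw [outDeg_decomp H V₀ P hd0 hdisj hcover x]
    congr 1
    rw [← Finset.sum_erase (Finset.univ) (a := i)]
    have : (P i).filter (fun y => H x y) = ∅ := by
      rw [Finset.filter_eq_empty_iff]
      exact fun {y} hy => hno x hx y hy
    simp [this]
  rw [Finset.sum_congr rfl h1, Finset.sum_add_distrib]
  congr 1
  rw [Finset.sum_comm]
  exact Finset.sum_congr rfl fun j _ => (eDir_eq_sum H (P i) (P j)).symm

lemma E_bounds (c₁ c₂ d ε : ℝ) (n : ℝ) (m : ℕ)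
    (G G' : V → V → Prop) (V₀ : Finset V) (P : Fin L → Finset V) (i : Fin L)
    (hdegL : ∀ v, c₁ * n ≤ (outDeg G v : ℝ))
    (hdegU : ∀ v, (outDeg G v : ℝ) ≤ c₂ * n)
    (hd0 : ∀ k, Disjoint V₀ (P k))
    (hdisj : ∀ k l, k ≠ l → Disjoint (P k) (P l))
    (hcover : ∀ v : V, v ∈ V₀ ∨ ∃ i, v ∈ P i)
    (hV0 : (V₀.card : ℝ) ≤ ε * n)
    (hPm : (P i).card = m)
    (hsub : ∀ a b : V, G' a b → G a b)
    (hdeg' : ∀ x : V, (outDeg G x : ℝ) - (d + ε) * n < (outDeg G' x : ℝ))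
    (hno : ∀ x ∈ P i, ∀ y ∈ P i, ¬ G' x y) :
    (m : ℝ) * ((c₁ - d - 2*ε) * n)
        ≤ ((∑ j ∈ Finset.univ.erase i, eDir G' (P i) (P j) : ℕ) : ℝ)
    ∧ ((∑ j ∈ Finset.univ.erase i, eDir G' (P i) (P j) : ℕ) : ℝ) ≤ c₂ * m * n := by
  have hcnt := count_eq G' V₀ P hd0 hdisj hcover i hno
  have hR : (∑ x ∈ P i, (outDeg G' x : ℝ))
      = (∑ x ∈ P i, ((V₀.filter fun y => G' x y).card : ℝ))
        + ((∑ j ∈ Finset.univ.erase i, eDir G' (P i) (P j) : ℕ) : ℝ) := by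
    exact_mod_cast congrArg (Nat.cast (R := ℝ)) hcnt
  have hA_lb : (m : ℝ) * ((c₁ - d - ε) * n) ≤ ∑ x ∈ P i, (outDeg G' x : ℝ) := by
    calc (m : ℝ) * ((c₁ - d - ε) * n) = ∑ _x ∈ P i, ((c₁ - d - ε) * n) := by
          rw [Finset.sum_const, hPm, nsmul_eq_mul]
      _ ≤ _ := Finset.sum_le_sum fun x _ => le_of_lt (by
          have h1 := hdeg' x; have h2 := hdegL x; linarith)
  have hsub' : ∀ x : V, outDeg G' x ≤ outDeg G x := by
    intro x
    apply Finset.card_le_card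
    intro u hu
    simp only [Finset.mem_filter, Finset.mem_univ, true_and] at hu ⊢
    exact hsub x u hu
  have hA_ub : ∑ x ∈ P i, (outDeg G' x : ℝ) ≤ (m : ℝ) * (c₂ * n) := by
    calc ∑ x ∈ P i, (outDeg G' x : ℝ) ≤ ∑ x ∈ P i, (c₂ * n) :=
          Finset.sum_le_sum fun x _ => le_trans (by exact_mod_cast hsub' x) (hdegU x)
      _ = (m : ℝ) * (c₂ * n) := by rw [Finset.sum_const, hPm, nsmul_eq_mul]
  have hB_ub : ∑ x ∈ P i, ((V₀.filter fun y => G' x y).card : ℝ) ≤ (m : ℝ) * (ε * n) := by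
    calc ∑ x ∈ P i, ((V₀.filter fun y => G' x y).card : ℝ)
        ≤ ∑ _x ∈ P i, ((V₀.card : ℝ)) :=
          Finset.sum_le_sum fun x _ => by exact_mod_cast Finset.card_filter_le _ _
      _ = (m : ℝ) * (V₀.card : ℝ) := by rw [Finset.sum_const, hPm, nsmul_eq_mul]
      _ ≤ (m : ℝ) * (ε * n) := mul_le_mul_of_nonneg_left hV0 (Nat.cast_nonneg m)
  have hB_nn : (0 : ℝ) ≤ ∑ x ∈ P i, ((V₀.filter fun y => G' x y).card : ℝ) :=
    Finset.sum_nonneg fun x _ => Nat.cast_nonneg _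
  constructor
  · nlinarith [hR, hA_lb, hB_ub]
  · nlinarith [hR, hA_ub, hB_nn]
end decomp

lemma floor_sum_bounds (c₁ c₂ d β ε : ℝ) (L m n : ℕ) (e : Fin L → ℕ) (i : Fin L)
    (hβ : 0 < β) (hβd : β ≤ d) (hε : 0 < ε) (hεd : ε ≤ d/8) (hε4 : ε ≤ 1/4)
    (hc₂ : c₂ < 1) (hc₂0 : 0 < c₂) (hc : 0 ≤ c₁ - d - 2*ε)
    (hm : 0 < m) (hn : 0 < n) (hL : 2 ≤ L)
    (hLm : (L : ℝ) * m ≤ n) (hmLn : (1 - ε) * n ≤ (L : ℝ) * m)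
    (hE1 : (m : ℝ) * ((c₁ - d - 2*ε) * n) ≤ ((∑ j ∈ Finset.univ.erase i, e j : ℕ) : ℝ))
    (hE2 : ((∑ j ∈ Finset.univ.erase i, e j : ℕ) : ℝ) ≤ c₂ * m * n) :
    (c₁ - 3*d) * L / β
        < ((∑ j ∈ Finset.univ.erase i, ⌊(e j : ℝ) / ((m : ℝ)^2) / β⌋₊ : ℕ) : ℝ)
    ∧ ((∑ j ∈ Finset.univ.erase i, ⌊(e j : ℝ) / ((m : ℝ)^2) / β⌋₊ : ℕ) : ℝ)
        < (c₂ + 2*ε) * L / β := by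
  have hm' : (0 : ℝ) < m := by exact_mod_cast hm
  have hn' : (0 : ℝ) < n := by exact_mod_cast hn
  have hL' : (2 : ℝ) ≤ L := by exact_mod_cast hL
  have hm2 : (0 : ℝ) < (m : ℝ)^2 := by positivity
  have hpos : (0 : ℝ) < (m : ℝ)^2 * β := by positivity
  set S : ℝ := ((∑ j ∈ Finset.univ.erase i, ⌊(e j : ℝ) / ((m : ℝ)^2) / β⌋₊ : ℕ) : ℝ) with hS
  set E : ℝ := ((∑ j ∈ Finset.univ.erase i, e j : ℕ) : ℝ) with hE
  have hSsum : S = ∑ j ∈ Finset.univ.erase i, ((⌊(e j : ℝ) / ((m : ℝ)^2) / β⌋₊ : ℕ) : ℝ) := by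
    rw [hS]; push_cast; ring
  have hEsum : E = ∑ j ∈ Finset.univ.erase i, ((e j : ℕ) : ℝ) := by
    rw [hE]; push_cast; ring
  have hx : ∀ j : Fin L, ((e j : ℝ) / (m : ℝ)^2 / β) * ((m : ℝ)^2 * β) = (e j : ℝ) := by
    intro j; field_simp
  -- upper: S * (m^2*β) ≤ E
  have hA : S * ((m : ℝ)^2 * β) ≤ E := by
    rw [hSsum, hEsum, Finset.sum_mul]
    apply Finset.sum_le_sum
    intro j _
    calc ((⌊(e j : ℝ) / ((m : ℝ)^2) / β⌋₊ : ℕ) : ℝ) * ((m : ℝ)^2 * β)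
        ≤ ((e j : ℝ) / (m : ℝ)^2 / β) * ((m : ℝ)^2 * β) :=
          mul_le_mul_of_nonneg_right (Nat.floor_le (by positivity)) (le_of_lt hpos)
      _ = (e j : ℝ) := hx j
  -- lower: E - (L-1)*(m^2*β) ≤ S * (m^2*β)
  have hcard : ((Finset.univ.erase i).card : ℝ) = (L : ℝ) - 1 := by
    rw [Finset.card_erase_of_mem (Finset.mem_univ i)]
    simp
    rw [Nat.cast_sub (by omega)]
    simp
  have hB : E - ((L : ℝ) - 1) * ((m : ℝ)^2 * β) ≤ S * ((m : ℝ)^2 * β) := by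
    have hterm : ∑ j ∈ Finset.univ.erase i, ((e j : ℝ) - (m : ℝ)^2 * β)
        ≤ ∑ j ∈ Finset.univ.erase i, ((⌊(e j : ℝ) / ((m : ℝ)^2) / β⌋₊ : ℕ) : ℝ) * ((m : ℝ)^2 * β) := by
      apply Finset.sum_le_sum
      intro j _
      have h1 : (e j : ℝ) / (m : ℝ)^2 / β - 1 < (⌊(e j : ℝ) / ((m : ℝ)^2) / β⌋₊ : ℝ) :=
        Nat.sub_one_lt_floor _
      nlinarith [hx j, hpos]
    rw [Finset.sum_sub_distrib, Finset.sum_const, nsmul_eq_mul, hcard] at hterm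
    rw [hSsum, Finset.sum_mul]
    calc E - ((L : ℝ) - 1) * ((m : ℝ)^2 * β)
        = ∑ j ∈ Finset.univ.erase i, ((e j : ℕ) : ℝ) - ((L : ℝ) - 1) * ((m : ℝ)^2 * β) := by
          rw [hEsum]
      _ ≤ _ := hterm
  constructor
  · -- lower bound
    rw [div_lt_iff₀ hβ, ← mul_lt_mul_iff_left₀ hm2]
    have hL0 : (0:ℝ) ≤ L := by positivity
    have hgap : β * ((L : ℝ) - 1) < (2*d - 2*ε) * L := by
      have h1 := mul_le_mul_of_nonneg_right hβd hL0
      have h2 := mul_le_mul_of_nonneg_right hεd hL0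
      have h3 : (0:ℝ) ≤ d * L := mul_nonneg (le_trans hβ.le hβd) hL0
      linarith
    have h5 : (c₁ - d - 2*ε) * ((L : ℝ) * m) ≤ (c₁ - d - 2*ε) * n :=
      mul_le_mul_of_nonneg_left hLm hc
    have h5' := mul_le_mul_of_nonneg_left h5 hm'.le
    have hgap' := mul_lt_mul_of_pos_right hgap hm2
    linarith [hB, hE1, h5', hgap']
  · -- upper bound
    rw [lt_div_iff₀ hβ, ← mul_lt_mul_iff_left₀ hm2]
    have key : c₂ * n < (c₂ + 2*ε) * ((L : ℝ) * m) := by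
      have h6 : (c₂ + 2*ε) * ((1 - ε) * n) ≤ (c₂ + 2*ε) * ((L : ℝ) * m) :=
        mul_le_mul_of_nonneg_left hmLn (by linarith)
      have h7 : (0:ℝ) < ε * n * (2 - c₂ - 2*ε) :=
        mul_pos (mul_pos hε hn') (by linarith)
      nlinarith [h6, h7]
    have key' := mul_lt_mul_of_pos_right key hm'
    linarith [hA, hE2, key']

/-- degree bounds for the reduced multidigraph.  With
`d_{i,j} = e_{G'}(P i, P j)/m²`, the out- and indegrees `Σ_j ⌊d_{i,j}/β⌋` of each cluster
in the reduced multidigraph lie strictly between `(c₁ − 3d)L/β` and `(c₂ + 2ε)L/β`. -/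
theorem reduced_multidigraph_degree_bounds :
    ∀ c₁ c₂ : ℝ, 0 < c₁ → c₁ ≤ c₂ → c₂ < 1 →
    ∃ d₀ : ℝ, 0 < d₀ ∧
    ∀ d : ℝ, 0 < d → d ≤ d₀ →
    ∃ β₀ : ℝ, 0 < β₀ ∧
    ∀ β : ℝ, 0 < β → β ≤ β₀ →
    ∃ ε₀ : ℝ, 0 < ε₀ ∧
    ∀ ε : ℝ, 0 < ε → ε ≤ ε₀ →
    ∃ L₀ : ℕ, ∀ L : ℕ, L₀ ≤ L →
    ∃ n₀ : ℕ, ∀ n : ℕ, n₀ ≤ n →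
    ∀ (V : Type) [Fintype V] [DecidableEq V], Fintype.card V = n →
    ∀ G G' : V → V → Prop,
      (∀ v, c₁ * (n : ℝ) ≤ (outDeg G v : ℝ) ∧ c₁ * (n : ℝ) ≤ (inDeg G v : ℝ) ∧
            (outDeg G v : ℝ) ≤ c₂ * (n : ℝ) ∧ (inDeg G v : ℝ) ≤ c₂ * (n : ℝ)) →
    ∀ V₀ : Finset V, ∀ P : Fin L → Finset V, ∀ m : ℕ,
      (∀ i, Disjoint V₀ (P i)) →
      (∀ i j, i ≠ j → Disjoint (P i) (P j)) →
      (∀ v : V, v ∈ V₀ ∨ ∃ i, v ∈ P i) →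
      ((V₀.card : ℝ) ≤ ε * (n : ℝ)) →
      (∀ i, (P i).card = m) →
      (∀ a b : V, G' a b → G a b) →
      (∀ x : V, (outDeg G x : ℝ) - (d + ε) * (n : ℝ) < (outDeg G' x : ℝ) ∧
                (inDeg G x : ℝ) - (d + ε) * (n : ℝ) < (inDeg G' x : ℝ)) →
      (∀ i, ∀ x ∈ P i, ∀ y ∈ P i, ¬ G' x y) →
      ∀ i : Fin L,
        ((c₁ - 3*d) * (L : ℝ) / β <
            ((∑ j ∈ Finset.univ.erase i, ⌊(eDir G' (P i) (P j) : ℝ) / ((m : ℝ)^2) / β⌋₊ : ℕ) : ℝ) ∧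
          ((∑ j ∈ Finset.univ.erase i, ⌊(eDir G' (P i) (P j) : ℝ) / ((m : ℝ)^2) / β⌋₊ : ℕ) : ℝ) <
            (c₂ + 2*ε) * (L : ℝ) / β) ∧
        ((c₁ - 3*d) * (L : ℝ) / β <
            ((∑ j ∈ Finset.univ.erase i, ⌊(eDir G' (P j) (P i) : ℝ) / ((m : ℝ)^2) / β⌋₊ : ℕ) : ℝ) ∧
          ((∑ j ∈ Finset.univ.erase i, ⌊(eDir G' (P j) (P i) : ℝ) / ((m : ℝ)^2) / β⌋₊ : ℕ) : ℝ) <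
            (c₂ + 2*ε) * (L : ℝ) / β) := by
  intro c₁ c₂ hc₁ h12 hc₂
  refine ⟨c₁/4, by positivity, ?_⟩
  intro d hd hd₀
  refine ⟨d, hd, ?_⟩
  intro β hβ hβd
  refine ⟨min (d/8) (1/4), by positivity, ?_⟩
  intro ε hε hε₀
  have hεd : ε ≤ d/8 := le_trans hε₀ (min_le_left _ _)
  have hε4 : ε ≤ 1/4 := le_trans hε₀ (min_le_right _ _)
  refine ⟨2, ?_⟩
  intro L hL
  refine ⟨1, ?_⟩
  intro n hn V _ _ hcard G G' hdeg V₀ P m hd0 hdisj hcover hV0 hPm hsub hdeg' hno i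
  have hn0 : 0 < n := hn
  have hn' : (0 : ℝ) < n := by exact_mod_cast hn0
  -- cardinality identity
  have hsumP : ∑ j : Fin L, (P j).card = L * m := by
    rw [Finset.sum_congr rfl fun j _ => hPm j]
    simp [Finset.sum_const, mul_comm]
  have hcardn : n = V₀.card + L * m := by
    rw [← hcard, card_decomp V₀ P hd0 hdisj hcover, hsumP]
  have hcardn' : (n : ℝ) = (V₀.card : ℝ) + (L : ℝ) * m := by
    rw [hcardn]; push_cast; ring
  have hm : 0 < m := by
    by_contra h
    push_neg at h
    interval_cases m
    have : (n : ℝ) = (V₀.card : ℝ) := by rw [hcardn']; push_cast; ring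
    rw [this] at hn'
    have h4 : (V₀.card : ℝ) ≤ (1/4) * (V₀.card : ℝ) := by
      calc (V₀.card : ℝ) ≤ ε * n := hV0
        _ = ε * (V₀.card : ℝ) := by rw [this]
        _ ≤ (1/4) * (V₀.card : ℝ) := by
            apply mul_le_mul_of_nonneg_right hε4 (Nat.cast_nonneg _)
    linarith
  have hLm : (L : ℝ) * m ≤ (n : ℝ) := by
    rw [hcardn']
    have : (0:ℝ) ≤ (V₀.card : ℝ) := Nat.cast_nonneg _
    linarith
  have hmLn : (1 - ε) * (n : ℝ) ≤ (L : ℝ) * m := by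
    have : (L : ℝ) * m = (n : ℝ) - (V₀.card : ℝ) := by rw [hcardn']; ring
    rw [this]
    nlinarith [hV0]
  have hc : 0 ≤ c₁ - d - 2*ε := by linarith
  have hc₂0 : 0 < c₂ := lt_of_lt_of_le hc₁ h12
  constructor
  · -- out-degrees
    have hE := E_bounds c₁ c₂ d ε (n : ℝ) m G G' V₀ P i
      (fun v => (hdeg v).1) (fun v => (hdeg v).2.2.1)
      hd0 hdisj hcover hV0 (hPm i) hsub (fun x => (hdeg' x).1) (hno i)
    exact floor_sum_bounds c₁ c₂ d β ε L m n _ i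
      hβ hβd hε hεd hε4 hc₂ hc₂0 hc hm hn0 hL hLm hmLn hE.1 hE.2
  · -- in-degrees
    have hE := E_bounds c₁ c₂ d ε (n : ℝ) m (fun a b => G b a) (fun a b => G' b a) V₀ P i
      (fun v => (hdeg v).2.1) (fun v => (hdeg v).2.2.2)
      hd0 hdisj hcover hV0 (hPm i) (fun a b h => hsub b a h)
      (fun x => (hdeg' x).2) (fun x hx y hy => hno i y hy x hx)
    simp only [eDir_flip] at hE
    exact floor_sum_bounds c₁ c₂ d β ε L m n _ i
      hβ hβd hε hεd hε4 hc₂ hc₂0 hc hm hn0 hL hLm hmLn hE.1 hE.2
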